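/- If an abelian group acts transitively on the points of a Steiner 2-design S(2,k,v) whose blocks form a single orbit, then either v ≤ k or v = k(k-1)+1. -/

import Mathlib

/-- If an abelian group acts transitively on the points of a Steiner 2-design whose
blocks form a single orbit, then `v ≤ k` or `v = k(k-1) + 1`. -/
theorem stmt_6 {α : Type*} [Fintype α] [DecidableEq α] {G : Type*} [CommGroup G]
    [MulAction G α] (k : ℕ)
    (B : Finset (Finset α))
    (hblocks : ∀ b ∈ B, b.card = k)
    (hpair : ∀ p q : α, p ≠ q → ∃! b, b ∈ B ∧ p ∈ b ∧ q ∈ b)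
    (haut : ∀ g : G, ∀ b ∈ B, b.image (fun x => g • x) ∈ B)
    (htrans : ∀ x y : α, ∃ g : G, g • x = y)
    (horbit : ∃ b0 ∈ B, ∀ b ∈ B, ∃ g : G, b = b0.image (fun x => g • x)) :
    Fintype.card α ≤ k ∨ Fintype.card α = k * (k - 1) + 1 := by
  classical
  set v := Fintype.card α with hv
  by_cases hvk : v ≤ k
  · exact Or.inl hvk
  push_neg at hvk
  right
  rcases Nat.lt_or_ge v 2 with hv2 | hv2
  · -- v ≤ 1, so v = 1 and k = 0
    obtain ⟨hk0, hv1⟩ : k = 0 ∧ v = 1 := by omega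
    rw [hk0, hv1]
  -- v ≥ 2 : get two distinct points, hence k ≥ 2
  obtain ⟨p, q, hpq⟩ := Fintype.exists_pair_of_one_lt_card hv2
  obtain ⟨b, ⟨hbB, hpb, hqb⟩, _⟩ := hpair p q hpq
  have hk2 : 2 ≤ k := by
    rw [← hblocks b hbB]
    exact Finset.one_lt_card.mpr ⟨p, hpb, q, hqb, hpq⟩
  obtain ⟨b0, hb0B, hb0orb⟩ := horbit
  obtain ⟨x0, hx0⟩ : ∃ x0, x0 ∈ b0 := by
    apply Finset.card_pos.mp
    rw [hblocks b0 hb0B]; omega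
  -- point stabilizer fixes everything
  have hfix : ∀ g : G, g • x0 = x0 → ∀ y : α, g • y = y := by
    intro g hg y
    obtain ⟨h, hh⟩ := htrans x0 y
    rw [← hh, ← mul_smul, mul_comm, mul_smul, hg]
  -- |B| ≤ v
  have hBle : B.card ≤ v := by
    have hsub : B ⊆ Finset.univ.image
        (fun y => b0.image (fun x => (htrans x0 y).choose • x)) := by
      intro b hb
      obtain ⟨g, hg⟩ := hb0orb b hb
      refine Finset.mem_image.mpr ⟨g • x0, Finset.mem_univ _, ?_⟩
      rw [hg]
      refine Finset.image_congr ?_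
      intro x hx
      set h := (htrans x0 (g • x0)).choose with hdef
      have hh : h • x0 = g • x0 := (htrans x0 (g • x0)).choose_spec
      have h1 : (g⁻¹ * h) • x0 = x0 := by
        rw [mul_smul, hh, inv_smul_smul]
      have h2 := hfix _ h1 x
      rw [mul_smul] at h2
      have := congrArg (fun z => g • z) h2
      simpa [smul_inv_smul] using this
    calc B.card ≤ _ := Finset.card_le_card hsub
      _ ≤ Finset.univ.card := Finset.card_image_le
      _ = v := rfl
  -- each point lies on r_x blocks with r_x * (k-1) = v - 1
  have hpart : ∀ x : α, (B.filter (fun b => x ∈ b)).card * (k - 1) = v - 1 := by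
    intro x
    have hun : (B.filter (fun b => x ∈ b)).biUnion (fun b => b.erase x)
        = Finset.univ.erase x := by
      ext z
      simp only [Finset.mem_biUnion, Finset.mem_filter, Finset.mem_erase,
        Finset.mem_univ, and_true]
      constructor
      · rintro ⟨c, ⟨hcB, hxc⟩, hz, hzc⟩
        exact hz
      · intro hz
        obtain ⟨c, ⟨hcB, hxc, hzc⟩, _⟩ := hpair x z (Ne.symm hz)
        exact ⟨c, ⟨hcB, hxc⟩, hz, hzc⟩
    have hcard := congrArg Finset.card hun
    rw [Finset.card_biUnion] at hcard
    · rw [Finset.sum_congr rfl (fun c hc => ?_)] at hcard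
      · rw [Finset.sum_const, smul_eq_mul, Finset.card_erase_of_mem (Finset.mem_univ x)] at hcard
        exact hcard
      · simp only [Finset.mem_filter] at hc
        rw [Finset.card_erase_of_mem hc.2, hblocks c hc.1]
    · intro b1 h1 b2 h2 hne
      simp only [Finset.mem_coe, Finset.mem_filter] at h1 h2
      rw [Function.onFun, Finset.disjoint_left]
      intro z hz1 hz2
      rw [Finset.mem_erase] at hz1 hz2
      obtain ⟨c, hc, hcu⟩ := hpair x z (Ne.symm hz1.1)
      exact hne ((hcu b1 ⟨h1.1, h1.2, hz1.2⟩).trans (hcu b2 ⟨h2.1, h2.2, hz2.2⟩).symm)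
  -- flag count
  have hflag : B.card * k = ∑ x : α, (B.filter (fun b => x ∈ b)).card := by
    calc B.card * k = ∑ b ∈ B, b.card := by
          rw [Finset.sum_congr rfl hblocks, Finset.sum_const, smul_eq_mul]
      _ = ∑ b ∈ B, ∑ x : α, if x ∈ b then 1 else 0 := by
          refine Finset.sum_congr rfl fun c hc => ?_
          rw [← Finset.card_filter]
          congr 1
          ext z; simp
      _ = ∑ x : α, ∑ b ∈ B, if x ∈ b then 1 else 0 := Finset.sum_comm
      _ = ∑ x : α, (B.filter (fun b => x ∈ b)).card := by
          refine Finset.sum_congr rfl fun x _ => ?_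
          rw [Finset.card_filter]
  -- global count: |B| * k * (k-1) = v * (v-1)
  have hglobal : B.card * k * (k - 1) = v * (v - 1) := by
    calc B.card * k * (k - 1) = (∑ x : α, (B.filter (fun b => x ∈ b)).card) * (k - 1) := by
          rw [hflag]
      _ = ∑ x : α, (B.filter (fun b => x ∈ b)).card * (k - 1) := by
          rw [Finset.sum_mul]
      _ = ∑ _x : α, (v - 1) := Finset.sum_congr rfl fun x _ => hpart x
      _ = v * (v - 1) := by rw [Finset.sum_const, smul_eq_mul]; rfl
  -- point off b0
  obtain ⟨y, hy⟩ : ∃ y, y ∉ b0 := by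
    by_contra hcon
    push_neg at hcon
    have : Finset.univ ⊆ b0 := fun z _ => hcon z
    have := Finset.card_le_card this
    rw [hblocks b0 hb0B, Finset.card_univ] at this
    omega
  have hy_ne : ∀ x ∈ b0, y ≠ x := fun x hx hxy => hy (hxy ▸ hx)
  -- r_y ≥ k
  have hk_le : k ≤ (B.filter (fun b => y ∈ b)).card := by
    rw [← hblocks b0 hb0B]
    refine Finset.card_le_card_of_injOn
      (fun x => if h : y ≠ x then (hpair y x h).choose else ∅) ?_ ?_
    · intro x hx
      have hne := hy_ne x hx
      simp only [dif_pos hne]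
      obtain ⟨⟨hcB, hyc, hxc⟩, _⟩ := (hpair y x hne).choose_spec
      exact Finset.mem_filter.mpr ⟨hcB, hyc⟩
    · intro x1 h1 x2 h2 heq
      by_contra hne12
      have hne1 := hy_ne x1 h1
      have hne2 := hy_ne x2 h2
      simp only [dif_pos hne1, dif_pos hne2] at heq
      obtain ⟨⟨hcB1, hyc1, hxc1⟩, _⟩ := (hpair y x1 hne1).choose_spec
      obtain ⟨⟨hcB2, hyc2, hxc2⟩, _⟩ := (hpair y x2 hne2).choose_spec
      obtain ⟨c, hc, hcu⟩ := hpair x1 x2 hne12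
      have e1 : (hpair y x1 hne1).choose = c := hcu _ ⟨hcB1, hxc1, heq ▸ hxc2⟩
      have e2 : b0 = c := hcu _ ⟨hb0B, h1, h2⟩
      exact hy (e2 ▸ e1 ▸ hyc1 : y ∈ b0)
  -- finish
  have hge : k * (k - 1) ≤ v - 1 := by
    rw [← hpart y]
    exact Nat.mul_le_mul_right _ hk_le
  have hle : v - 1 ≤ k * (k - 1) := by
    have h1 : v * (v - 1) ≤ v * (k * (k - 1)) := by
      calc v * (v - 1) = B.card * k * (k - 1) := hglobal.symm
        _ = B.card * (k * (k - 1)) := by ring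
        _ ≤ v * (k * (k - 1)) := Nat.mul_le_mul_right _ hBle
    exact Nat.le_of_mul_le_mul_left h1 (by omega)
  have heq : v - 1 = k * (k - 1) := le_antisymm hle hge
  rw [← heq]
  exact (Nat.succ_pred_eq_of_pos (lt_of_lt_of_le Nat.zero_lt_two hv2)).symm
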